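/- Let α ∈ (0,1) and θ ∈ (0,1). Suppose u : {0,…,n} × [0,1] → [0,1] satisfies: u(n,v) = 1 whenever v ≥ α/2; u(0,v) = 0 whenever v ≤ α/2; and in all other cases (1−v) F_{u(y,v)}(y−1) + v F_{u(y,v)}(y) = α/2. Suppose ℓ : {0,…,n} × [0,1] → [0,1] satisfies: ℓ(0,v) = 0 whenever v ≤ 1−α/2; ℓ(n,v) = 1 whenever v ≥ 1−α/2; and in all other cases (1−v)(1 − F_{ℓ(y,v)}(y−1)) + v (1 − F_{ℓ(y,v)}(y)) = α/2. Then Korn's data-randomized confidence interval, defined using W with conditional distribution uniform on {1/C(n,y), …, C(n,y)/C(n,y)} given Y = y (where C(n,y) = n choose y), satisfies both tail conditions: Σ_{y=0}^{n} Σ_{k=1}^{C(n,y)} (f_θ(y)/C(n,y)) · 𝟙[u(y, k/C(n,y)) < θ] ≤ α/2 and Σ_{y=0}^{n} Σ_{k=0}^{C(n,y)−1} (f_θ(y)/C(n,y)) · 𝟙[ℓ(y, k/C(n,y)) > θ] ≤ α/2. -/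

import Mathlib

/-- The Binomial(n, θ) probability mass function `f_θ(y) = C(n,y) θ^y (1-θ)^(n-y)`. -/
noncomputable def binomP (n : ℕ) (θ : ℝ) (y : ℕ) : ℝ :=
  (n.choose y : ℝ) * θ ^ y * (1 - θ) ^ (n - y)

/-- `F_θ(y-1) = ∑_{j=0}^{y-1} f_θ(j)`, with the convention `F_θ(-1) = 0`. -/
noncomputable def binomCDFpred (n : ℕ) (θ : ℝ) (y : ℕ) : ℝ :=
  ∑ j ∈ Finset.range y, binomP n θ j

/-- The Binomial(n, θ) cumulative distribution function `F_θ(y) = ∑_{j=0}^{y} f_θ(j)`. -/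
noncomputable def binomCDF (n : ℕ) (θ : ℝ) (y : ℕ) : ℝ :=
  ∑ j ∈ Finset.range (y + 1), binomP n θ j

lemma binomP_nonneg (n : ℕ) {θ : ℝ} (h0 : 0 ≤ θ) (h1 : θ ≤ 1) (y : ℕ) : 0 ≤ binomP n θ y := by
  unfold binomP
  have h2 : (0:ℝ) ≤ 1 - θ := by linarith
  positivity

lemma sum_binomP (n : ℕ) (θ : ℝ) : ∑ y ∈ Finset.range (n+1), binomP n θ y = 1 := by
  have h := add_pow θ (1-θ) n
  rw [show θ + (1-θ) = 1 by ring, one_pow] at h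
  rw [h]
  apply Finset.sum_congr rfl
  intro y _
  unfold binomP
  ring

lemma binomCDF_n (n : ℕ) (θ : ℝ) : binomCDF n θ n = 1 := sum_binomP n θ

lemma binomCDF_eq (n : ℕ) (θ : ℝ) (y : ℕ) :
    binomCDF n θ y = binomCDFpred n θ y + binomP n θ y :=
  Finset.sum_range_succ _ _

lemma binomCDFpred_zero (n : ℕ) (θ : ℝ) : binomCDFpred n θ 0 = 0 :=
  Finset.sum_range_zero _

lemma binomCDFpred_succ (n : ℕ) (θ : ℝ) (y : ℕ) :
    binomCDFpred n θ (y+1) = binomCDF n θ y := rfl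

lemma binomP_zero (n : ℕ) (θ : ℝ) : binomP n θ 0 = (1-θ)^n := by
  simp [binomP]

lemma binomP_le_one (n : ℕ) {θ : ℝ} (h0 : 0 ≤ θ) (h1 : θ ≤ 1) {y : ℕ} (hy : y ≤ n) :
    binomP n θ y ≤ 1 := by
  have h := Finset.single_le_sum (f := binomP n θ)
    (fun j _ => binomP_nonneg n h0 h1 j) (Finset.mem_range.2 (by omega : y < n+1))
  rw [sum_binomP n θ] at h
  exact h

lemma telescope_sum (a b : ℕ → ℝ) (h0 : a 0 = 0) (h : ∀ j, a (j+1) = b j) (y : ℕ) :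
    ∑ j ∈ Finset.range (y+1), (a j - b j) = - b y := by
  induction y with
  | zero => simp [h0]
  | succ y ih => rw [Finset.sum_range_succ, ih, h]; ring

lemma hasDerivAt_binomP (n j : ℕ) (t : ℝ) :
    HasDerivAt (fun s => binomP n s j)
      ((n.choose j : ℝ) * j * t^(j-1) * (1-t)^(n-j)
        - (n.choose j : ℝ) * ((n-j : ℕ):ℝ) * t^j * (1-t)^(n-j-1)) t := by
  have h1 : HasDerivAt (fun s : ℝ => s ^ j) ((j:ℝ) * t^(j-1)) t := hasDerivAt_pow j t
  have h2 : HasDerivAt (fun s : ℝ => (1-s)^(n-j))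
      ((((n-j:ℕ)):ℝ) * (1-t)^(n-j-1) * (-1)) t :=
    ((hasDerivAt_id t).const_sub 1).pow (n-j)
  have h3 := (h1.const_mul ((n.choose j : ℝ))).mul h2
  have h4 : (fun s : ℝ => (n.choose j : ℝ) * s ^ j * (1-s)^(n-j)) = fun s => binomP n s j := by
    ext s; unfold binomP; ring
  rw [show ((fun y : ℝ => (n.choose j : ℝ) * y ^ j) * fun s : ℝ => (1 - s) ^ (n - j)) = fun s => binomP n s j from h4] at h3
  refine h3.congr_deriv ?_
  ring

lemma aux_ab (n j : ℕ) (t : ℝ) :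
    (n.choose (j+1) : ℝ) * ((j+1 : ℕ):ℝ) * t^((j+1)-1) * (1-t)^(n-(j+1))
      = (n.choose j : ℝ) * ((n-j : ℕ):ℝ) * t^j * (1-t)^(n-j-1) := by
  have hc : ((n.choose (j+1) * (j+1) : ℕ) : ℝ) = ((n.choose j * (n-j) : ℕ) : ℝ) := by
    rw [Nat.choose_succ_right_eq]
  have he : n - (j+1) = n - j - 1 := by omega
  rw [he, Nat.add_sub_cancel]
  push_cast at hc ⊢
  linear_combination (t^j * (1-t)^(n-j-1)) * hc

lemma hasDerivAt_binomCDF (n y : ℕ) (t : ℝ) :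
    HasDerivAt (fun s => binomCDF n s y)
      (-((n.choose y : ℝ) * ((n - y : ℕ) : ℝ) * t ^ y * (1 - t) ^ (n - y - 1))) t := by
  have h : HasDerivAt (fun s => binomCDF n s y)
      (∑ j ∈ Finset.range (y+1),
        ((n.choose j : ℝ) * j * t^(j-1) * (1-t)^(n-j)
          - (n.choose j : ℝ) * ((n-j : ℕ):ℝ) * t^j * (1-t)^(n-j-1))) t := by
    unfold binomCDF
    exact HasDerivAt.fun_sum (fun j _ => hasDerivAt_binomP n j t)
  rwa [telescope_sum (fun j => (n.choose j : ℝ) * j * t^(j-1) * (1-t)^(n-j))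
    (fun j => (n.choose j : ℝ) * ((n-j : ℕ):ℝ) * t^j * (1-t)^(n-j-1)) (by simp)
    (fun j => aux_ab n j t) y] at h

lemma binomCDF_anti (n y : ℕ) : AntitoneOn (fun t => binomCDF n t y) (Set.Icc (0:ℝ) 1) := by
  have hd : ∀ t : ℝ, HasDerivAt (fun s => binomCDF n s y)
      (-((n.choose y : ℝ) * ((n - y : ℕ) : ℝ) * t ^ y * (1 - t) ^ (n - y - 1))) t :=
    hasDerivAt_binomCDF n y
  apply antitoneOn_of_deriv_nonpos (convex_Icc 0 1)
  · exact fun t _ => ((hd t).continuousAt).continuousWithinAt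
  · exact fun t _ => ((hd t).differentiableAt).differentiableWithinAt
  · intro t ht
    rw [interior_Icc] at ht
    rw [(hd t).deriv]
    have h1 : (0:ℝ) ≤ t ^ y := pow_nonneg ht.1.le y
    have h2 : (0:ℝ) ≤ (1 - t) ^ (n - y - 1) := pow_nonneg (by linarith [ht.2]) _
    have h3 : (0:ℝ) ≤ (n.choose y : ℝ) * ((n - y : ℕ) : ℝ) := by positivity
    nlinarith [mul_nonneg (mul_nonneg h3 h1) h2]

lemma binomCDFpred_anti (n y : ℕ) :
    AntitoneOn (fun t => binomCDFpred n t y) (Set.Icc (0:ℝ) 1) := by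
  cases y with
  | zero => simp only [binomCDFpred_zero]; exact antitoneOn_const
  | succ m => simp only [binomCDFpred_succ]; exact binomCDF_anti n m

lemma upper_pt (n : ℕ) (α : ℝ) (hα : α ∈ Set.Ioo (0 : ℝ) 1)
    (θ : ℝ) (hθ : θ ∈ Set.Ioo (0 : ℝ) 1)
    (u : ℕ → ℝ → ℝ)
    (hu01 : ∀ y ≤ n, ∀ v ∈ Set.Icc (0 : ℝ) 1, u y v ∈ Set.Icc (0 : ℝ) 1)
    (hun : ∀ v ∈ Set.Icc (0 : ℝ) 1, α / 2 ≤ v → u n v = 1)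
    (hu : ∀ y ≤ n, ∀ v ∈ Set.Icc (0 : ℝ) 1, ¬(y = n ∧ α / 2 ≤ v) → ¬(y = 0 ∧ v ≤ α / 2) →
      (1 - v) * binomCDFpred n (u y v) y + v * binomCDF n (u y v) y = α / 2)
    (y : ℕ) (hy : y ≤ n) (v : ℝ) (hv0 : 0 < v) (hv1 : v ≤ 1)
    (hlt : u y v < θ) :
    binomCDFpred n θ y + v * binomP n θ y ≤ α / 2 := by
  have hvI : v ∈ Set.Icc (0:ℝ) 1 := ⟨hv0.le, hv1⟩
  by_cases h1 : y = n ∧ α / 2 ≤ v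
  · exfalso
    rw [h1.1, hun v hvI h1.2] at hlt
    linarith [hθ.2]
  by_cases h2 : y = 0 ∧ v ≤ α / 2
  · rw [h2.1, binomCDFpred_zero, binomP_zero]
    have hp0 : (0:ℝ) ≤ (1-θ)^n := pow_nonneg (by linarith [hθ.2]) n
    have hp1 : (1-θ)^n ≤ 1 := pow_le_one₀ (by linarith [hθ.2]) (by linarith [hθ.1])
    nlinarith [h2.2, hv0]
  · have heq := hu y hy v hvI h1 h2
    have hu' : u y v ∈ Set.Icc (0:ℝ) 1 := hu01 y hy v hvI
    have hθI : θ ∈ Set.Icc (0:ℝ) 1 := ⟨hθ.1.le, hθ.2.le⟩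
    have h3 : binomCDFpred n θ y ≤ binomCDFpred n (u y v) y :=
      binomCDFpred_anti n y hu' hθI hlt.le
    have h4 : binomCDF n θ y ≤ binomCDF n (u y v) y :=
      binomCDF_anti n y hu' hθI hlt.le
    have h5 := mul_le_mul_of_nonneg_left h3 (show (0:ℝ) ≤ 1 - v by linarith)
    have h6 := mul_le_mul_of_nonneg_left h4 hv0.le
    have h7 := binomCDF_eq n θ y
    nlinarith

lemma lower_pt (n : ℕ) (α : ℝ) (hα : α ∈ Set.Ioo (0 : ℝ) 1)
    (θ : ℝ) (hθ : θ ∈ Set.Ioo (0 : ℝ) 1)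
    (l : ℕ → ℝ → ℝ)
    (hl01 : ∀ y ≤ n, ∀ v ∈ Set.Icc (0 : ℝ) 1, l y v ∈ Set.Icc (0 : ℝ) 1)
    (hl0 : ∀ v ∈ Set.Icc (0 : ℝ) 1, v ≤ 1 - α / 2 → l 0 v = 0)
    (hl : ∀ y ≤ n, ∀ v ∈ Set.Icc (0 : ℝ) 1,
      ¬(y = 0 ∧ v ≤ 1 - α / 2) → ¬(y = n ∧ 1 - α / 2 ≤ v) →
      (1 - v) * (1 - binomCDFpred n (l y v) y) + v * (1 - binomCDF n (l y v) y) = α / 2)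
    (y : ℕ) (hy : y ≤ n) (v : ℝ) (hv0 : 0 ≤ v) (hv1 : v < 1)
    (hlt : θ < l y v) :
    (1 - binomCDF n θ y) + (1 - v) * binomP n θ y ≤ α / 2 := by
  have hvI : v ∈ Set.Icc (0:ℝ) 1 := ⟨hv0, hv1.le⟩
  by_cases h2 : y = 0 ∧ v ≤ 1 - α / 2
  · exfalso
    rw [h2.1, hl0 v hvI h2.2] at hlt
    linarith [hθ.1]
  by_cases h1 : y = n ∧ 1 - α / 2 ≤ v
  · rw [h1.1, binomCDF_n]
    have hf0 : 0 ≤ binomP n θ n := binomP_nonneg n hθ.1.le hθ.2.le n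
    have hf1 : binomP n θ n ≤ 1 := binomP_le_one n hθ.1.le hθ.2.le le_rfl
    nlinarith [h1.2]
  · have heq := hl y hy v hvI h2 h1
    have hl' : l y v ∈ Set.Icc (0:ℝ) 1 := hl01 y hy v hvI
    have hθI : θ ∈ Set.Icc (0:ℝ) 1 := ⟨hθ.1.le, hθ.2.le⟩
    have h3 : binomCDFpred n (l y v) y ≤ binomCDFpred n θ y :=
      binomCDFpred_anti n y hθI hl' hlt.le
    have h4 : binomCDF n (l y v) y ≤ binomCDF n θ y :=
      binomCDF_anti n y hθI hl' hlt.le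
    have h5 := mul_le_mul_of_nonneg_left h3 (show (0:ℝ) ≤ 1 - v by linarith)
    have h6 := mul_le_mul_of_nonneg_left h4 hv0
    have h7 := binomCDF_eq n θ y
    nlinarith

/-- Korn's data-randomized confidence interval, built from Stevens' randomized endpoints
`u` and `ℓ` evaluated at the data-randomization variables `W` (uniform on
`{1/C(n,y), …, C(n,y)/C(n,y)}` given `Y = y`) and `W̃ = W - 1/C(n,y)`, satisfies both tail
conditions `P_θ(θ > u(Y,W)) ≤ α/2` and `P_θ(θ < ℓ(Y,W̃)) ≤ α/2`. -/
theorem stmt_15 (n : ℕ) (hn : 1 ≤ n) (α : ℝ) (hα : α ∈ Set.Ioo (0 : ℝ) 1)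
    (θ : ℝ) (hθ : θ ∈ Set.Ioo (0 : ℝ) 1)
    (u : ℕ → ℝ → ℝ)
    (hu01 : ∀ y ≤ n, ∀ v ∈ Set.Icc (0 : ℝ) 1, u y v ∈ Set.Icc (0 : ℝ) 1)
    (hun : ∀ v ∈ Set.Icc (0 : ℝ) 1, α / 2 ≤ v → u n v = 1)
    (hu0 : ∀ v ∈ Set.Icc (0 : ℝ) 1, v ≤ α / 2 → u 0 v = 0)
    (hu : ∀ y ≤ n, ∀ v ∈ Set.Icc (0 : ℝ) 1, ¬(y = n ∧ α / 2 ≤ v) → ¬(y = 0 ∧ v ≤ α / 2) →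
      (1 - v) * binomCDFpred n (u y v) y + v * binomCDF n (u y v) y = α / 2)
    (l : ℕ → ℝ → ℝ)
    (hl01 : ∀ y ≤ n, ∀ v ∈ Set.Icc (0 : ℝ) 1, l y v ∈ Set.Icc (0 : ℝ) 1)
    (hl0 : ∀ v ∈ Set.Icc (0 : ℝ) 1, v ≤ 1 - α / 2 → l 0 v = 0)
    (hln : ∀ v ∈ Set.Icc (0 : ℝ) 1, 1 - α / 2 ≤ v → l n v = 1)
    (hl : ∀ y ≤ n, ∀ v ∈ Set.Icc (0 : ℝ) 1,
      ¬(y = 0 ∧ v ≤ 1 - α / 2) → ¬(y = n ∧ 1 - α / 2 ≤ v) →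
      (1 - v) * (1 - binomCDFpred n (l y v) y) + v * (1 - binomCDF n (l y v) y) = α / 2) :
    (∑ y ∈ Finset.range (n + 1), ∑ k ∈ Finset.Icc 1 (n.choose y),
      binomP n θ y / (n.choose y : ℝ) *
        (if u y ((k : ℝ) / (n.choose y : ℝ)) < θ then (1 : ℝ) else 0)) ≤ α / 2 ∧
    (∑ y ∈ Finset.range (n + 1), ∑ k ∈ Finset.range (n.choose y),
      binomP n θ y / (n.choose y : ℝ) *
        (if θ < l y ((k : ℝ) / (n.choose y : ℝ)) then (1 : ℝ) else 0)) ≤ α / 2 := by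
  have hα2 : (0:ℝ) < α := hα.1
  have fnn : ∀ y, 0 ≤ binomP n θ y := binomP_nonneg n hθ.1.le hθ.2.le
  have hCpos : ∀ y ≤ n, (0:ℝ) < (n.choose y : ℝ) := by
    intro y hy
    exact_mod_cast Nat.choose_pos hy
  constructor
  · -- upper tail
    have hpt : ∀ y ≤ n, ∀ v : ℝ, 0 < v → v ≤ 1 → u y v < θ →
        binomCDFpred n θ y + v * binomP n θ y ≤ α / 2 :=
      fun y hy v hv0 hv1 hlt => upper_pt n α hα θ hθ u hu01 hun hu y hy v hv0 hv1 hlt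
    set S : ℕ → ℝ := fun y => ∑ k ∈ Finset.Icc 1 (n.choose y),
        binomP n θ y / (n.choose y : ℝ) *
          (if u y ((k : ℝ) / (n.choose y : ℝ)) < θ then (1 : ℝ) else 0) with hSdef
    show ∑ y ∈ Finset.range (n + 1), S y ≤ α / 2
    have hSf : ∀ y ≤ n, S y ≤ binomP n θ y := by
      intro y hy
      have hC := hCpos y hy
      calc S y ≤ ∑ k ∈ Finset.Icc 1 (n.choose y), binomP n θ y / (n.choose y : ℝ) := by
            apply Finset.sum_le_sum
            intro k _
            have h0 : (0:ℝ) ≤ binomP n θ y / (n.choose y : ℝ) := div_nonneg (fnn y) hC.le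
            split <;> simp <;> positivity
        _ = (n.choose y : ℝ) * (binomP n θ y / (n.choose y : ℝ)) := by
            rw [Finset.sum_const, Nat.card_Icc]
            simp [nsmul_eq_mul]
        _ = binomP n θ y := by field_simp
    suffices H : ∀ m, m ≤ n + 1 → ∑ y ∈ Finset.range m, S y ≤ α / 2 from H (n+1) le_rfl
    intro m hm
    induction m with
    | zero => simpa using by linarith
    | succ m ih =>
      have hmn : m ≤ n := by omega
      rw [Finset.sum_range_succ]
      by_cases hact : ∃ k ∈ Finset.Icc 1 (n.choose m), u m ((k : ℝ) / (n.choose m : ℝ)) < θ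
      · have hC := hCpos m hmn
        set K := (Finset.Icc 1 (n.choose m)).filter
            (fun k : ℕ => u m ((k : ℝ) / (n.choose m : ℝ)) < θ) with hKdef
        have hK : K.Nonempty := by
          obtain ⟨k, hk1, hk2⟩ := hact
          exact ⟨k, Finset.mem_filter.2 ⟨hk1, hk2⟩⟩
        set k₀ := K.max' hK with hk₀def
        have hk₀K : k₀ ∈ K := K.max'_mem hK
        have hk₀I := (Finset.mem_filter.1 hk₀K).1
        have hk₀p := (Finset.mem_filter.1 hk₀K).2
        have hk₀1 : 1 ≤ k₀ := (Finset.mem_Icc.1 hk₀I).1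
        have hk₀C : k₀ ≤ n.choose m := (Finset.mem_Icc.1 hk₀I).2
        have hKsub : K ⊆ Finset.Icc 1 k₀ := by
          intro k hk
          exact Finset.mem_Icc.2 ⟨(Finset.mem_Icc.1 (Finset.mem_filter.1 hk).1).1, K.le_max' k hk⟩
        have hcard : K.card ≤ k₀ := by
          have := Finset.card_le_card hKsub
          rwa [Nat.card_Icc, Nat.add_sub_cancel] at this
        have hv0 : (0:ℝ) < (k₀ : ℝ) / (n.choose m : ℝ) := by
          apply div_pos _ hC
          exact_mod_cast hk₀1
        have hv1 : (k₀ : ℝ) / (n.choose m : ℝ) ≤ 1 := by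
          rw [div_le_one hC]
          exact_mod_cast hk₀C
        have hpt' := hpt m hmn _ hv0 hv1 hk₀p
        have hSm : S m ≤ (k₀ : ℝ) / (n.choose m : ℝ) * binomP n θ m := by
          have e1 : S m = ∑ k ∈ K, binomP n θ m / (n.choose m : ℝ) := by
            rw [hSdef, hKdef, Finset.sum_filter]
            apply Finset.sum_congr rfl
            intro k _
            split <;> simp
          rw [e1, Finset.sum_const, nsmul_eq_mul]
          calc (K.card : ℝ) * (binomP n θ m / (n.choose m : ℝ))
              ≤ (k₀ : ℝ) * (binomP n θ m / (n.choose m : ℝ)) := by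
                apply mul_le_mul_of_nonneg_right _ (div_nonneg (fnn m) hC.le)
                exact_mod_cast hcard
            _ = (k₀ : ℝ) / (n.choose m : ℝ) * binomP n θ m := by ring
        have hhead : ∑ y ∈ Finset.range m, S y ≤ binomCDFpred n θ m := by
          exact Finset.sum_le_sum (fun y hy => hSf y (by
            have := Finset.mem_range.1 hy; omega))
        linarith
      · have hSm : S m = 0 := by
          rw [hSdef]
          apply Finset.sum_eq_zero
          intro k hk
          rw [if_neg (fun hcon => hact ⟨k, hk, hcon⟩), mul_zero]
        rw [hSm, add_zero]
        exact ih (by omega)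
  · -- lower tail
    have hpt : ∀ y ≤ n, ∀ v : ℝ, 0 ≤ v → v < 1 → θ < l y v →
        (1 - binomCDF n θ y) + (1 - v) * binomP n θ y ≤ α / 2 :=
      fun y hy v hv0 hv1 hlt => lower_pt n α hα θ hθ l hl01 hl0 hl y hy v hv0 hv1 hlt
    have hsum1 := sum_binomP n θ
    set S : ℕ → ℝ := fun y => ∑ k ∈ Finset.range (n.choose y),
        binomP n θ y / (n.choose y : ℝ) *
          (if θ < l y ((k : ℝ) / (n.choose y : ℝ)) then (1 : ℝ) else 0) with hSdef
    show ∑ y ∈ Finset.range (n + 1), S y ≤ α / 2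
    have hSf : ∀ y ≤ n, S y ≤ binomP n θ y := by
      intro y hy
      have hC := hCpos y hy
      calc S y ≤ ∑ k ∈ Finset.range (n.choose y), binomP n θ y / (n.choose y : ℝ) := by
            apply Finset.sum_le_sum
            intro k _
            have h0 : (0:ℝ) ≤ binomP n θ y / (n.choose y : ℝ) := div_nonneg (fnn y) hC.le
            split <;> simp <;> positivity
        _ = (n.choose y : ℝ) * (binomP n θ y / (n.choose y : ℝ)) := by
            rw [Finset.sum_const, Finset.card_range]
            simp [nsmul_eq_mul]
        _ = binomP n θ y := by field_simp
    have htail : ∀ m ≤ n, ∑ y ∈ Finset.Ico (m+1) (n+1), binomP n θ y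
        = 1 - binomCDF n θ m := by
      intro m hm
      have h1 := Finset.sum_Ico_consecutive (binomP n θ)
        (Nat.zero_le (m+1)) (by omega : m+1 ≤ n+1)
      rw [← Finset.range_eq_Ico, ← Finset.range_eq_Ico] at h1
      rw [show binomCDF n θ m = ∑ j ∈ Finset.range (m+1), binomP n θ j from rfl]
      linarith [h1, hsum1]
    suffices H : ∀ j, j ≤ n + 1 → ∑ y ∈ Finset.Ico (n+1-j) (n+1), S y ≤ α / 2 by
      have h := H (n+1) le_rfl
      rwa [Nat.sub_self, ← Finset.range_eq_Ico] at h
    intro j hj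
    induction j with
    | zero => simpa using by linarith
    | succ j ih =>
      have hm : n+1-(j+1) = n-j := by omega
      have hm1 : n+1-j = (n-j)+1 := by omega
      set m := n - j with hmdef
      have hmn : m ≤ n := by omega
      rw [hm, Finset.sum_eq_sum_Ico_succ_bot (by omega : m < n+1)]
      have htb : ∑ y ∈ Finset.Ico (m+1) (n+1), S y ≤ 1 - binomCDF n θ m := by
        rw [← htail m hmn]
        apply Finset.sum_le_sum
        intro y hy
        have := Finset.mem_Ico.1 hy
        exact hSf y (by omega)
      by_cases hact : ∃ k ∈ Finset.range (n.choose m), θ < l m ((k : ℝ) / (n.choose m : ℝ))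
      · have hC := hCpos m hmn
        set K := (Finset.range (n.choose m)).filter
            (fun k : ℕ => θ < l m ((k : ℝ) / (n.choose m : ℝ))) with hKdef
        have hK : K.Nonempty := by
          obtain ⟨k, hk1, hk2⟩ := hact
          exact ⟨k, Finset.mem_filter.2 ⟨hk1, hk2⟩⟩
        set k₀ := K.min' hK with hk₀def
        have hk₀K : k₀ ∈ K := K.min'_mem hK
        have hk₀C : k₀ < n.choose m := Finset.mem_range.1 (Finset.mem_filter.1 hk₀K).1
        have hk₀p := (Finset.mem_filter.1 hk₀K).2
        have hKsub : K ⊆ Finset.Ico k₀ (n.choose m) := by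
          intro k hk
          exact Finset.mem_Ico.2 ⟨K.min'_le k hk, Finset.mem_range.1 (Finset.mem_filter.1 hk).1⟩
        have hcard : K.card ≤ n.choose m - k₀ := by
          have := Finset.card_le_card hKsub
          rwa [Nat.card_Ico] at this
        have hv0 : (0:ℝ) ≤ (k₀ : ℝ) / (n.choose m : ℝ) := by positivity
        have hv1 : (k₀ : ℝ) / (n.choose m : ℝ) < 1 := by
          rw [div_lt_one hC]
          exact_mod_cast hk₀C
        have hpt' := hpt m hmn _ hv0 hv1 hk₀p
        have hSm : S m ≤ (1 - (k₀ : ℝ) / (n.choose m : ℝ)) * binomP n θ m := by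
          have e1 : S m = ∑ k ∈ K, binomP n θ m / (n.choose m : ℝ) := by
            rw [hSdef, hKdef, Finset.sum_filter]
            apply Finset.sum_congr rfl
            intro k _
            split <;> simp
          rw [e1, Finset.sum_const, nsmul_eq_mul]
          have hcast : ((n.choose m - k₀ : ℕ) : ℝ) = (n.choose m : ℝ) - (k₀ : ℝ) := by
            have hle : k₀ ≤ n.choose m := hk₀C.le
            push_cast [hle]
            ring
          calc (K.card : ℝ) * (binomP n θ m / (n.choose m : ℝ))
              ≤ ((n.choose m - k₀ : ℕ) : ℝ) * (binomP n θ m / (n.choose m : ℝ)) := by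
                apply mul_le_mul_of_nonneg_right _ (div_nonneg (fnn m) hC.le)
                exact_mod_cast hcard
            _ = (1 - (k₀ : ℝ) / (n.choose m : ℝ)) * binomP n θ m := by
                rw [hcast]
                field_simp
        linarith
      · have hSm : S m = 0 := by
          rw [hSdef]
          apply Finset.sum_eq_zero
          intro k hk
          rw [if_neg (fun hcon => hact ⟨k, hk, hcon⟩), mul_zero]
        rw [hSm, zero_add]
        have := ih (by omega)
        rwa [hm1] at this
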